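/- For any finite multigraph G of maximum degree Δ, the carving width of G is at most max(Δ, 1) times a constant multiple of (treewidth(G) + 1); more precisely, carw(G) ≤ C · Δ · (tw(G) + 1) for some absolute constant C. -/

import Mathlib

/-- A rooted binary tree with leaves labeled by elements of `V`
(used as a carving decomposition of a multigraph with vertex set `V`). -/
inductive CTree (V : Type) : Type
  | leaf : V → CTree V
  | node : CTree V → CTree V → CTree V

/-- The list of leaf labels of a labeled binary tree. -/
def CTree.verts {V : Type} : CTree V → List V
  | .leaf v => [v]
  | .node l r => l.verts ++ r.verts

/-- The subtree at a position given by a path of left/right (`false`/`true`) moves. -/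
def CTree.subtreeAt {V : Type} : CTree V → List Bool → Option (CTree V)
  | t, [] => some t
  | .leaf _, _ :: _ => none
  | .node l r, b :: p => (if b then r else l).subtreeAt p

set_option linter.unusedSectionVars false
namespace CW
open SimpleGraph Walk

section CTreePart
variable {V : Type}

def combineAll : CTree V → List (CTree V) → CTree V
  | t, [] => t
  | t, u :: us => combineAll (.node t u) us

lemma verts_combineAll (t : CTree V) (l : List (CTree V)) :
    (combineAll t l).verts = t.verts ++ l.flatMap CTree.verts := by
  induction l generalizing t with
  | nil => simp [combineAll]
  | cons u us ih => simp [combineAll, ih, CTree.verts, List.append_assoc]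

lemma subtreeAt_leaf {v : V} {p s} (h : (CTree.leaf v).subtreeAt p = some s) :
    s = .leaf v := by
  cases p with
  | nil => simp [CTree.subtreeAt] at h; exact h.symm
  | cons b p => simp [CTree.subtreeAt] at h

lemma subtreeAt_node {a b : CTree V} {p s} (h : (CTree.node a b).subtreeAt p = some s) :
    s = .node a b ∨ (∃ p', a.subtreeAt p' = some s) ∨ (∃ p', b.subtreeAt p' = some s) := by
  cases p with
  | nil => simp [CTree.subtreeAt] at h; exact Or.inl h.symm
  | cons c p =>
    cases c with
    | false => exact Or.inr (Or.inl ⟨p, by simpa [CTree.subtreeAt] using h⟩)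
    | true => exact Or.inr (Or.inr ⟨p, by simpa [CTree.subtreeAt] using h⟩)

def AllGood (G : List V → Prop) (T : CTree V) : Prop :=
  ∀ p s, T.subtreeAt p = some s → G s.verts

lemma allGood_leaf {G : List V → Prop} {v : V} (h : G [v]) : AllGood G (.leaf v) := by
  intro p s hs; rw [subtreeAt_leaf hs]; exact h

lemma allGood_node {G : List V → Prop} {a b : CTree V} (ha : AllGood G a) (hb : AllGood G b)
    (h : G (a.verts ++ b.verts)) : AllGood G (.node a b) := by
  intro p s hs
  rcases subtreeAt_node hs with rfl | ⟨p', hp'⟩ | ⟨p', hp'⟩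
  · exact h
  · exact ha p' s hp'
  · exact hb p' s hp'

lemma allGood_combineAll {G : List V → Prop} (t : CTree V) (l : List (CTree V))
    (ht : AllGood G t) (hl : ∀ u ∈ l, AllGood G u)
    (hG : ∀ l', l' <+: l → G (t.verts ++ l'.flatMap CTree.verts)) :
    AllGood G (combineAll t l) := by
  induction l generalizing t with
  | nil => exact ht
  | cons u us ih =>
    refine ih (.node t u) ?_ (fun w hw => hl w (List.mem_cons_of_mem _ hw)) ?_
    · refine allGood_node ht (hl u (List.mem_cons_self)) ?_
      have := hG [u] ⟨us, rfl⟩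
      simpa using this
    · intro l' hl'
      have := hG (u :: l') (by
        obtain ⟨rest, hrest⟩ := hl'
        exact ⟨rest, by simp [hrest]⟩)
      simpa [CTree.verts, List.append_assoc] using this

end CTreePart

variable {ι : Type} [Fintype ι] [DecidableEq ι] {Tg : SimpleGraph ι}

noncomputable def pa (hT : Tg.IsTree) (r k : ι) : Tg.Walk r k :=
  (hT.existsUnique_path r k).choose

lemma pa_isPath (hT : Tg.IsTree) (r k : ι) : (pa hT r k).IsPath :=
  (hT.existsUnique_path r k).choose_spec.1

lemma pa_unique (hT : Tg.IsTree) {r k : ι} {q : Tg.Walk r k} (hq : q.IsPath) :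
    q = pa hT r k :=
  (hT.existsUnique_path r k).choose_spec.2 q hq

/-- `k` lies in the subtree rooted at `j` (w.r.t. root `r`). -/
def inSub (hT : Tg.IsTree) (r j k : ι) : Prop := j ∈ (pa hT r k).support

lemma inSub_self (hT : Tg.IsTree) (r k : ι) : inSub hT r k k := end_mem_support _

lemma inSub_root (hT : Tg.IsTree) (r k : ι) : inSub hT r r k := start_mem_support _

lemma pa_takeUntil (hT : Tg.IsTree) {r j k : ι} (h : j ∈ (pa hT r k).support) :
    (pa hT r k).takeUntil j h = pa hT r j :=
  pa_unique hT ((pa_isPath hT r k).takeUntil h)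

open Classical in
/-- The children of `i` in the tree rooted at `r`. -/
noncomputable def children (hT : Tg.IsTree) (r i : ι) : Finset ι :=
  Finset.univ.filter (fun c => Tg.Adj i c ∧ c ∉ (pa hT r i).support)

lemma child_spec (hT : Tg.IsTree) {r i c : ι} (hc : c ∈ children hT r i) :
    ∃ h : Tg.Adj i c, pa hT r c = (pa hT r i).concat h := by
  simp only [children, Finset.mem_filter] at hc
  obtain ⟨-, hadj, hns⟩ := hc
  refine ⟨hadj, (pa_unique hT ?_).symm⟩
  rw [Walk.isPath_def, Walk.support_concat]
  exact List.Nodup.append (pa_isPath hT r i).support_nodup (List.nodup_singleton c)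
    (by simpa using hns)

lemma support_pa_child (hT : Tg.IsTree) {r i c : ι} (hc : c ∈ children hT r i) :
    (pa hT r c).support = (pa hT r i).support ++ [c] := by
  obtain ⟨h, hp⟩ := child_spec hT hc
  rw [hp, Walk.support_concat]

lemma inSub_child (hT : Tg.IsTree) {r i c k : ι} (hc : c ∈ children hT r i)
    (h : inSub hT r c k) : inSub hT r i k ∧ k ≠ i := by
  have hi : i ∈ (pa hT r c).support := by
    rw [support_pa_child hT hc]
    exact List.mem_append_left _ (end_mem_support _)
  have hsub : (pa hT r c).support ⊆ (pa hT r k).support := by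
    rw [← pa_takeUntil hT h]
    exact Walk.support_takeUntil_subset _ h
  constructor
  · exact hsub hi
  · rintro rfl
    simp only [children, Finset.mem_filter] at hc
    exact hc.2.2 h

lemma children_eq_of_inSub (hT : Tg.IsTree) {r i c c' k : ι}
    (hc : c ∈ children hT r i) (hc' : c' ∈ children hT r i)
    (h1 : inSub hT r c k) (h2 : inSub hT r c' k) : c = c' := by
  have e1 : (pa hT r k).support =
      ((pa hT r i).support ++ [c]) ++ ((pa hT r k).dropUntil c h1).support.tail := by
    conv_lhs => rw [← (pa hT r k).take_spec h1]
    rw [Walk.support_append, pa_takeUntil hT h1, support_pa_child hT hc]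
  have e2 : (pa hT r k).support =
      ((pa hT r i).support ++ [c']) ++ ((pa hT r k).dropUntil c' h2).support.tail := by
    conv_lhs => rw [← (pa hT r k).take_spec h2]
    rw [Walk.support_append, pa_takeUntil hT h2, support_pa_child hT hc']
  rw [e1, List.append_assoc, List.append_assoc] at e2
  have h3 := List.append_cancel_left e2
  have h4 := congrArg List.head? h3
  simp only [List.singleton_append, List.head?_cons, Option.some.injEq] at h4
  exact h4

lemma sub_step (hT : Tg.IsTree) {r i k : ι} (h : inSub hT r i k) (hne : k ≠ i) :
    ∃ c ∈ children hT r i, inSub hT r c k := by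
  obtain ⟨q, w2, hqw⟩ := Walk.mem_support_iff_exists_append.mp h
  cases w2 with
  | nil => exact absurd rfl hne
  | @cons _ u _ hadj w' =>
    have hq : q = pa hT r i := pa_unique hT (hqw ▸ pa_isPath hT r k).of_append_left
    have hnd : (pa hT r k).support.Nodup := (pa_isPath hT r k).support_nodup
    have hsupp : (pa hT r k).support = q.support ++ w'.support := by
      rw [hqw, Walk.support_append, Walk.support_cons, List.tail_cons]
    have hu_w' : u ∈ w'.support := w'.start_mem_support
    have hu_not_q : u ∉ q.support := by
      rw [hsupp] at hnd
      exact fun hq' => (List.disjoint_of_nodup_append hnd) hq' hu_w'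
    refine ⟨u, ?_, ?_⟩
    · simp only [children, Finset.mem_filter]
      exact ⟨Finset.mem_univ _, hadj, by rwa [← hq]⟩
    · rw [inSub, hsupp]
      exact List.mem_append_right _ hu_w'

lemma cross_edge (hT : Tg.IsTree) {r i c a b : ι} (hc : c ∈ children hT r i)
    (hab : Tg.Adj a b) (ha : inSub hT r c a) (hb : ¬ inSub hT r c b) : a = c ∧ b = i := by
  have hac : a = c := by
    set w : Tg.Walk r a := (pa hT r b).concat hab.symm with hwdef
    have hbp : w.bypass = pa hT r a := pa_unique hT (Walk.bypass_isPath w)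
    have hcw : c ∈ w.support := by
      have ha' : c ∈ (pa hT r a).support := ha
      rw [← hbp] at ha'
      exact Walk.support_bypass_subset w ha'
    rw [hwdef, Walk.support_concat, List.mem_append] at hcw
    rcases hcw with hcw | hcw
    · exact absurd hcw hb
    · have : c = a := by simpa using hcw
      exact this.symm
  subst hac
  refine ⟨rfl, ?_⟩
  have hpath : ((pa hT r b).concat hab.symm).IsPath := by
    rw [Walk.isPath_def, Walk.support_concat]
    exact List.Nodup.append (pa_isPath hT r b).support_nodup (List.nodup_singleton a)
      (by simpa [inSub] using hb)
  have he : (pa hT r b).concat hab.symm = pa hT r a := pa_unique hT hpath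
  obtain ⟨h, hspec⟩ := child_spec hT hc
  rw [hspec] at he
  obtain ⟨hv, -⟩ := Walk.concat_inj he
  exact hv

lemma walk_of_induce {S : Set ι} : ∀ {x y : ↥S} (_w : (Tg.induce S).Walk x y),
    ∃ w' : Tg.Walk x y, ∀ z ∈ w'.support, z ∈ S := by
  intro x y w
  induction w with
  | nil =>
    refine ⟨Walk.nil, ?_⟩
    intro z hz
    simp only [Walk.support_nil, List.mem_singleton] at hz
    subst hz
    exact Subtype.coe_prop _
  | @cons x u y h q ih =>
    obtain ⟨w', hw'⟩ := ih
    refine ⟨Walk.cons (by simpa using h) w', ?_⟩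
    intro z hz
    rw [Walk.support_cons, List.mem_cons] at hz
    rcases hz with rfl | hz
    · exact x.2
    · exact hw' z hz

lemma exists_walk_in {S : Set ι} (hS : (Tg.induce S).Connected) {a b : ι}
    (ha : a ∈ S) (hb : b ∈ S) : ∃ w : Tg.Walk a b, ∀ x ∈ w.support, x ∈ S := by
  obtain ⟨w⟩ := hS ⟨a, ha⟩ ⟨b, hb⟩
  exact walk_of_induce w

lemma walk_cross (P : ι → Prop) : ∀ {a b : ι} (w : Tg.Walk a b), P a → ¬ P b →
    ∃ x y, Tg.Adj x y ∧ P x ∧ ¬ P y ∧ x ∈ w.support ∧ y ∈ w.support := by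
  intro a b w
  induction w with
  | nil => intro h1 h2; exact absurd h1 h2
  | @cons a u b hadj q ih =>
    intro hpa hpb
    by_cases hu : P u
    · obtain ⟨x, y, h1, h2, h3, h4, h5⟩ := ih hu hpb
      exact ⟨x, y, h1, h2, h3, by simp [h4], by simp [h5]⟩
    · exact ⟨a, u, hadj, hpa, hu, by simp, by simp [q.start_mem_support]⟩

lemma sep (hT : Tg.IsTree) {r i c : ι} (hc : c ∈ children hT r i) {S : Set ι}
    (hS : (Tg.induce S).Connected) {k1 k2 : ι} (hk1 : k1 ∈ S) (hk2 : k2 ∈ S)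
    (h1 : inSub hT r c k1) (h2 : ¬ inSub hT r c k2) : c ∈ S ∧ i ∈ S := by
  obtain ⟨w, hw⟩ := exists_walk_in hS hk1 hk2
  obtain ⟨x, y, hxy, hx, hy, hxs, hys⟩ := walk_cross (inSub hT r c) w h1 h2
  obtain ⟨rfl, rfl⟩ := cross_edge hT hc hxy hx hy
  exact ⟨hw _ hxs, hw _ hys⟩

section Main
variable {V E : Type} [Fintype V] [DecidableEq V] [Fintype E]
variable {β : ι → Finset V}

open Classical in
noncomputable def subF (hT : Tg.IsTree) (r i : ι) : Finset ι :=
  Finset.univ.filter (fun k => inSub hT r i k)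

open Classical in
lemma mem_subF {hT : Tg.IsTree} {r i k : ι} : k ∈ subF hT r i ↔ inSub hT r i k := by
  simp [subF]

open Classical in
noncomputable def Wsub [Fintype V] (β : ι → Finset V) (hT : Tg.IsTree) (r i : ι) : Finset V :=
  Finset.univ.filter (fun v => ∃ k, inSub hT r i k ∧ v ∈ β k)

open Classical in
lemma mem_Wsub {hT : Tg.IsTree} {r i : ι} {v : V} :
    v ∈ Wsub β hT r i ↔ ∃ k, inSub hT r i k ∧ v ∈ β k := by
  simp [Wsub]

def GoodP (ε : E → V × V) (β : ι → Finset V) : List V → Prop :=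
  fun L => ∃ k, ∀ e, (((ε e).1 ∈ L ∧ (ε e).2 ∉ L) ∨ ((ε e).2 ∈ L ∧ (ε e).1 ∉ L)) →
    (ε e).1 ∈ β k ∨ (ε e).2 ∈ β k

lemma card_subF_child {hT : Tg.IsTree} {r i c : ι} (hc : c ∈ children hT r i) :
    (subF hT r c).card < (subF hT r i).card := by
  have hsub : subF hT r c ⊆ (subF hT r i).erase i := by
    intro k hk
    obtain ⟨h1, h2⟩ := inSub_child hT hc (mem_subF.mp hk)
    exact Finset.mem_erase.mpr ⟨h2, mem_subF.mpr h1⟩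
  calc (subF hT r c).card ≤ ((subF hT r i).erase i).card := Finset.card_le_card hsub
    _ < (subF hT r i).card := Finset.card_erase_lt_of_mem (mem_subF.mpr (inSub_self hT r i))

variable {hT : Tg.IsTree} {r : ι}

lemma sepV (hconn : ∀ v : V, (Tg.induce {j : ι | v ∈ β j}).Connected)
    {i c : ι} (hc : c ∈ children hT r i) {v : V} {k1 k2 : ι}
    (h1 : inSub hT r c k1) (hv1 : v ∈ β k1) (h2 : ¬ inSub hT r c k2) (hv2 : v ∈ β k2) :
    v ∈ β c ∧ v ∈ β i :=
  sep hT hc (hconn v) hv1 hv2 h1 h2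

lemma piece_not_in_root (hconn : ∀ v : V, (Tg.induce {j : ι | v ∈ β j}).Connected)
    {i c : ι} (hc : c ∈ children hT r i) {v : V}
    (hv : v ∈ Wsub β hT r c \ (β c ∩ β i)) : v ∉ β i := by
  intro hvi
  rw [Finset.mem_sdiff] at hv
  obtain ⟨k1, hk1, hv1⟩ := mem_Wsub.mp hv.1
  have hni : ¬ inSub hT r c i := fun h => (inSub_child hT hc h).2 rfl
  have := sepV hconn hc hk1 hv1 hni hvi
  exact hv.2 (Finset.mem_inter.mpr this)

lemma piece_disjoint (hconn : ∀ v : V, (Tg.induce {j : ι | v ∈ β j}).Connected)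
    {i c c' : ι} (hc : c ∈ children hT r i) (hc' : c' ∈ children hT r i) (hne : c ≠ c')
    {v : V} (h1 : v ∈ Wsub β hT r c \ (β c ∩ β i)) (h2 : v ∈ Wsub β hT r c' \ (β c' ∩ β i)) :
    False := by
  rw [Finset.mem_sdiff] at h1 h2
  obtain ⟨k1, hk1, hv1⟩ := mem_Wsub.mp h1.1
  obtain ⟨k2, hk2, hv2⟩ := mem_Wsub.mp h2.1
  by_cases h : inSub hT r c k2
  · exact hne (children_eq_of_inSub hT hc hc' h hk2)
  · exact h1.2 (Finset.mem_inter.mpr (sepV hconn hc hk1 hv1 h hv2))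

lemma piece_sub {i c : ι} (hc : c ∈ children hT r i) {v : V}
    (hv : v ∈ Wsub β hT r c \ (β c ∩ β i)) : v ∈ Wsub β hT r i := by
  rw [Finset.mem_sdiff] at hv
  obtain ⟨k1, hk1, hv1⟩ := mem_Wsub.mp hv.1
  exact mem_Wsub.mpr ⟨k1, (inSub_child hT hc hk1).1, hv1⟩

lemma flatMap_map_leaf (xs : List V) :
    ((xs.map CTree.leaf).flatMap CTree.verts) = xs := by
  induction xs with
  | nil => simp
  | cons x xs ih => simp [CTree.verts, ih]

lemma sublist_good {ε : E → V × V}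
    (hcov : ∀ e : E, ∃ j, (ε e).1 ∈ β j ∧ (ε e).2 ∈ β j)
    (hconn : ∀ v : V, (Tg.induce {j : ι | v ∈ β j}).Connected)
    {i : ι} (Q : List (CTree V))
    (hQ : ∀ u ∈ Q, (∃ w, u = CTree.leaf w ∧ w ∈ β i) ∨
      (∃ c ∈ children hT r i, ∀ w, w ∈ u.verts ↔ w ∈ Wsub β hT r c \ (β c ∩ β i))) :
    GoodP ε β (Q.flatMap CTree.verts) := by
  refine ⟨i, ?_⟩
  have main : ∀ x y : V, (∃ j, x ∈ β j ∧ y ∈ β j) → x ∈ Q.flatMap CTree.verts →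
      y ∉ Q.flatMap CTree.verts → x ∈ β i ∨ y ∈ β i := by
    rintro x y ⟨j, hxj, hyj⟩ hx hy
    rw [List.mem_flatMap] at hx
    obtain ⟨u, huQ, hxu⟩ := hx
    rcases hQ u huQ with ⟨w, rfl, hwi⟩ | ⟨c, hc, hiff⟩
    · left
      have hxw : x = w := by simpa [CTree.verts] using hxu
      exact hxw ▸ hwi
    · have hxc : x ∈ Wsub β hT r c \ (β c ∩ β i) := (hiff x).mp hxu
      by_cases hj : inSub hT r c j
      · right
        have hyu : y ∉ u.verts := fun h => hy (List.mem_flatMap.mpr ⟨u, huQ, h⟩)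
        have hyW : y ∈ Wsub β hT r c := mem_Wsub.mpr ⟨j, hj, hyj⟩
        by_cases hyD : y ∈ β c ∩ β i
        · exact (Finset.mem_inter.mp hyD).2
        · exact absurd ((hiff y).mpr (Finset.mem_sdiff.mpr ⟨hyW, hyD⟩)) hyu
      · left
        rw [Finset.mem_sdiff] at hxc
        obtain ⟨k1, hk1, hv1⟩ := mem_Wsub.mp hxc.1
        exact (sepV hconn hc hk1 hv1 hj hxj).2
  intro e hcross
  rcases hcross with ⟨h1, h2⟩ | ⟨h1, h2⟩
  · exact main _ _ (hcov e) h1 h2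
  · exact (main _ _ (⟨(hcov e).choose, (hcov e).choose_spec.2, (hcov e).choose_spec.1⟩) h1 h2).symm

lemma ML {ε : E → V × V}
    (hcov : ∀ e : E, ∃ j, (ε e).1 ∈ β j ∧ (ε e).2 ∈ β j)
    (hconn : ∀ v : V, (Tg.induce {j : ι | v ∈ β j}).Connected) :
    ∀ (n : ℕ) (i : ι) (D : Finset V), (subF hT r i).card ≤ n → D ⊆ β i →
    (Wsub β hT r i \ D).Nonempty →
    ∃ T : CTree V, T.verts.Nodup ∧ (∀ v, v ∈ T.verts ↔ v ∈ Wsub β hT r i \ D) ∧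
      AllGood (GoodP ε β) T := by
  intro n
  induction n with
  | zero =>
    intro i D hcard _ _
    exfalso
    have h1 : i ∈ subF hT r i := mem_subF.mpr (inSub_self hT r i)
    have h2 := Finset.card_pos.mpr ⟨i, h1⟩
    omega
  | succ n ihn =>
    intro i D hcard hD hne
    classical
    set cl : List ι := ((children hT r i).toList.filter
      (fun c => (Wsub β hT r c \ (β c ∩ β i)).Nonempty)) with hcl
    have hclmem : ∀ c ∈ cl, c ∈ children hT r i ∧ (Wsub β hT r c \ (β c ∩ β i)).Nonempty := by
      intro c hc
      rw [hcl, List.mem_filter] at hc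
      exact ⟨Finset.mem_toList.mp hc.1, by simpa using hc.2⟩
    have hclnd : cl.Nodup := (Finset.nodup_toList _).filter _
    have aux : ∀ cs : List ι, cs.Nodup →
        (∀ c ∈ cs, c ∈ children hT r i ∧ (Wsub β hT r c \ (β c ∩ β i)).Nonempty) →
        ∃ l : List (CTree V), (l.flatMap CTree.verts).Nodup ∧
          (∀ v, v ∈ l.flatMap CTree.verts ↔ ∃ c ∈ cs, v ∈ Wsub β hT r c \ (β c ∩ β i)) ∧
          (∀ u ∈ l, AllGood (GoodP ε β) u) ∧
          (∀ u ∈ l, ∃ c ∈ children hT r i, ∀ w, w ∈ u.verts ↔ w ∈ Wsub β hT r c \ (β c ∩ β i)) := by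
      intro cs
      induction cs with
      | nil => intro _ _; exact ⟨[], by simp, by simp, by simp, by simp⟩
      | cons c cs ihc =>
        intro hnd hmem
        obtain ⟨hcchild, hcne⟩ := hmem c (List.mem_cons_self)
        obtain ⟨l', hnd', hmem', hgood', hpiece'⟩ := ihc (List.nodup_cons.mp hnd).2
          (fun c' hc' => hmem c' (List.mem_cons_of_mem _ hc'))
        have hcardc : (subF hT r c).card ≤ n := by
          have h3 := card_subF_child (hT := hT) hcchild
          omega
        obtain ⟨Tc, hTnd, hTmem, hTgood⟩ := ihn c (β c ∩ β i) hcardc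
          Finset.inter_subset_left hcne
        refine ⟨Tc :: l', ?_, ?_, ?_, ?_⟩
        · rw [List.flatMap_cons]
          refine List.Nodup.append hTnd hnd' ?_
          intro v hv1 hv2
          obtain ⟨c', hc'cs, hv2'⟩ := (hmem' v).mp hv2
          have hc'child := (hmem c' (List.mem_cons_of_mem _ hc'cs)).1
          have hne' : c ≠ c' := fun h => (List.nodup_cons.mp hnd).1 (h ▸ hc'cs)
          exact piece_disjoint hconn hcchild hc'child hne' ((hTmem v).mp hv1) hv2'
        · intro v
          rw [List.flatMap_cons, List.mem_append, hTmem, hmem']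
          constructor
          · rintro (h | ⟨c', h1, h2⟩)
            · exact ⟨c, List.mem_cons_self, h⟩
            · exact ⟨c', List.mem_cons_of_mem _ h1, h2⟩
          · rintro ⟨c', h1, h2⟩
            rcases List.mem_cons.mp h1 with rfl | h1
            · exact Or.inl h2
            · exact Or.inr ⟨c', h1, h2⟩
        · intro u hu
          rcases List.mem_cons.mp hu with rfl | hu
          · exact hTgood
          · exact hgood' u hu
        · intro u hu
          rcases List.mem_cons.mp hu with rfl | hu
          · exact ⟨c, hcchild, hTmem⟩
          · exact hpiece' u hu
    obtain ⟨l, hlnd, hlmem, hlgood, hlpiece⟩ := aux cl hclnd hclmem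
    set L0 : List (CTree V) := ((β i \ D).toList).map CTree.leaf with hL0
    set P : List (CTree V) := L0 ++ l with hP
    have hflat : P.flatMap CTree.verts = (β i \ D).toList ++ l.flatMap CTree.verts := by
      rw [hP, List.flatMap_append, hL0, flatMap_map_leaf]
    have hPmem : ∀ v, v ∈ P.flatMap CTree.verts ↔ v ∈ Wsub β hT r i \ D := by
      intro v
      rw [hflat, List.mem_append, Finset.mem_toList]
      constructor
      · rintro (hv | hv)
        · rw [Finset.mem_sdiff] at hv ⊢
          exact ⟨mem_Wsub.mpr ⟨i, inSub_self hT r i, hv.1⟩, hv.2⟩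
        · obtain ⟨c, hccl, hvc⟩ := (hlmem v).mp hv
          have hcchild := (hclmem c hccl).1
          rw [Finset.mem_sdiff]
          refine ⟨piece_sub hcchild hvc, fun hvD => ?_⟩
          exact piece_not_in_root hconn hcchild hvc (hD hvD)
      · intro hv
        rw [Finset.mem_sdiff] at hv
        obtain ⟨k, hk, hvk⟩ := mem_Wsub.mp hv.1
        by_cases hki : k = i
        · subst hki
          exact Or.inl (Finset.mem_sdiff.mpr ⟨hvk, hv.2⟩)
        · obtain ⟨c, hcchild, hck⟩ := sub_step hT hk hki
          by_cases hvDc : v ∈ β c ∩ β i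
          · exact Or.inl (Finset.mem_sdiff.mpr ⟨(Finset.mem_inter.mp hvDc).2, hv.2⟩)
          · have hvpc : v ∈ Wsub β hT r c \ (β c ∩ β i) :=
              Finset.mem_sdiff.mpr ⟨mem_Wsub.mpr ⟨k, hck, hvk⟩, hvDc⟩
            have hccl : c ∈ cl := by
              rw [hcl, List.mem_filter]
              refine ⟨Finset.mem_toList.mpr hcchild, by simp only [decide_eq_true_eq]; exact ⟨v, hvpc⟩⟩
            exact Or.inr ((hlmem v).mpr ⟨c, hccl, hvpc⟩)
    have hPnd : (P.flatMap CTree.verts).Nodup := by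
      rw [hflat]
      refine List.Nodup.append (Finset.nodup_toList _) hlnd ?_
      intro v hv1 hv2
      obtain ⟨c, hccl, hvc⟩ := (hlmem v).mp hv2
      exact piece_not_in_root hconn (hclmem c hccl).1 hvc
        ((Finset.mem_sdiff.mp (Finset.mem_toList.mp hv1)).1)
    have hPOK : ∀ u ∈ P, (∃ w, u = CTree.leaf w ∧ w ∈ β i) ∨
        (∃ c ∈ children hT r i, ∀ w, w ∈ u.verts ↔ w ∈ Wsub β hT r c \ (β c ∩ β i)) := by
      intro u hu
      rw [hP] at hu
      rcases List.mem_append.mp hu with hu | hu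
      · rw [hL0, List.mem_map] at hu
        obtain ⟨w, hw, rfl⟩ := hu
        exact Or.inl ⟨w, rfl, (Finset.mem_sdiff.mp (Finset.mem_toList.mp hw)).1⟩
      · exact Or.inr (hlpiece u hu)
    have hPgood : ∀ u ∈ P, AllGood (GoodP ε β) u := by
      intro u hu
      rw [hP] at hu
      rcases List.mem_append.mp hu with hu | hu
      · rw [hL0, List.mem_map] at hu
        obtain ⟨w, hw, rfl⟩ := hu
        have hwi : w ∈ β i := (Finset.mem_sdiff.mp (Finset.mem_toList.mp hw)).1
        refine allGood_leaf ⟨i, ?_⟩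
        rintro e (⟨h1, _⟩ | ⟨h1, _⟩)
        · exact Or.inl (by rwa [(by simpa using h1 : (ε e).1 = w)])
        · exact Or.inr (by rwa [(by simpa using h1 : (ε e).2 = w)])
      · exact hlgood u hu
    obtain ⟨v0, hv0⟩ := hne
    have hv0' : v0 ∈ P.flatMap CTree.verts := (hPmem v0).mpr hv0
    have hPne : P ≠ [] := by
      intro h
      rw [h] at hv0'
      simp at hv0'
    obtain ⟨h0, t, hPeq⟩ := List.exists_cons_of_ne_nil hPne
    have hvertsT : (combineAll h0 t).verts = P.flatMap CTree.verts := by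
      rw [verts_combineAll, hPeq, List.flatMap_cons]
    refine ⟨combineAll h0 t, ?_, ?_, ?_⟩
    · rw [hvertsT]; exact hPnd
    · intro v; rw [hvertsT]; exact hPmem v
    · refine allGood_combineAll h0 t ?_ ?_ ?_
      · exact hPgood h0 (by rw [hPeq]; exact List.mem_cons_self)
      · intro u hu
        exact hPgood u (by rw [hPeq]; exact List.mem_cons_of_mem _ hu)
      · intro l' hl'
        have heq : (h0.verts ++ l'.flatMap CTree.verts) = ((h0 :: l').flatMap CTree.verts) := by
          rw [List.flatMap_cons]
        rw [heq]
        refine sublist_good (hT := hT) (r := r) hcov hconn (i := i) _ ?_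
        intro u hu
        rcases List.mem_cons.mp hu with rfl | hu
        · exact hPOK u (by rw [hPeq]; exact List.mem_cons_self)
        · exact hPOK u (by rw [hPeq]; exact List.mem_cons_of_mem _ (hl'.sublist.subset hu))


lemma cut_card_le {ε : E → V × V} {Δ : ℕ}
    (hdeg : ∀ v : V, (Finset.univ.filter (fun e : E => (ε e).1 = v ∨ (ε e).2 = v)).card ≤ Δ)
    (b : Finset V) (L : List V)
    (hL : ∀ e : E, (((ε e).1 ∈ L ∧ (ε e).2 ∉ L) ∨ ((ε e).2 ∈ L ∧ (ε e).1 ∉ L)) →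
      (ε e).1 ∈ b ∨ (ε e).2 ∈ b) :
    (Finset.univ.filter (fun e : E =>
      ((ε e).1 ∈ L ∧ (ε e).2 ∉ L) ∨ ((ε e).2 ∈ L ∧ (ε e).1 ∉ L))).card ≤ b.card * Δ := by
  classical
  have hsub : (Finset.univ.filter (fun e : E =>
      ((ε e).1 ∈ L ∧ (ε e).2 ∉ L) ∨ ((ε e).2 ∈ L ∧ (ε e).1 ∉ L)))
      ⊆ b.biUnion (fun v => Finset.univ.filter (fun e : E => (ε e).1 = v ∨ (ε e).2 = v)) := by
    intro e he
    rw [Finset.mem_filter] at he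
    rcases hL e he.2 with h | h
    · exact Finset.mem_biUnion.mpr ⟨(ε e).1, h, Finset.mem_filter.mpr ⟨Finset.mem_univ _, Or.inl rfl⟩⟩
    · exact Finset.mem_biUnion.mpr ⟨(ε e).2, h, Finset.mem_filter.mpr ⟨Finset.mem_univ _, Or.inr rfl⟩⟩
  calc _ ≤ (b.biUnion (fun v => Finset.univ.filter
        (fun e : E => (ε e).1 = v ∨ (ε e).2 = v))).card := Finset.card_le_card hsub
    _ ≤ ∑ v ∈ b, (Finset.univ.filter (fun e : E => (ε e).1 = v ∨ (ε e).2 = v)).card :=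
        Finset.card_biUnion_le
    _ ≤ ∑ _v ∈ b, Δ := Finset.sum_le_sum (fun v _ => hdeg v)
    _ = b.card * Δ := by rw [Finset.sum_const, smul_eq_mul]

end Main
end CW

open CW in
/-- There is an absolute constant `C` such that every finite loopless multigraph `G`
of maximum degree at most `Δ` admitting a tree decomposition of width at most `t`
admits a rooted carving decomposition of width at most `C·Δ·(t+1)`; that is,
`carw(G) ≤ C·Δ·(tw(G)+1)`. -/
theorem carvingWidth_le_of_treewidth :
    ∃ C : ℕ, ∀ (V E ι : Type) [Fintype V] [DecidableEq V] [Fintype E] [Fintype ι],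
    ∀ (ε : E → V × V), (∀ e, (ε e).1 ≠ (ε e).2) →
    ∀ (Δ t : ℕ),
    -- maximum degree at most Δ
    (∀ v : V, (Finset.univ.filter (fun e : E => (ε e).1 = v ∨ (ε e).2 = v)).card ≤ Δ) →
    -- a tree decomposition (Tg, β) of width at most t
    ∀ (Tg : SimpleGraph ι) (β : ι → Finset V), Tg.IsTree →
    (∀ v : V, ∃ i, v ∈ β i) →
    (∀ e : E, ∃ i, (ε e).1 ∈ β i ∧ (ε e).2 ∈ β i) →
    (∀ v : V, (Tg.induce {i : ι | v ∈ β i}).Connected) →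
    (∀ i, (β i).card ≤ t + 1) →
    Nonempty V →
    -- then there is a rooted carving decomposition of width at most C·Δ·(t+1)
    ∃ T : CTree V, T.verts.Nodup ∧ (∀ v : V, v ∈ T.verts) ∧
      ∀ p s, T.subtreeAt p = some s →
        (Finset.univ.filter (fun e : E =>
          ((ε e).1 ∈ s.verts ∧ (ε e).2 ∉ s.verts) ∨
          ((ε e).2 ∈ s.verts ∧ (ε e).1 ∉ s.verts))).card ≤ C * Δ * (t + 1) := by

  refine ⟨1, ?_⟩
  intro V E ι _ _ _ _ ε _hloop Δ t hdeg Tg β hT hvert hcov hconn hsize hV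
  letI := Classical.decEq ι
  have hιne : Nonempty ι := hT.isConnected.nonempty
  let r : ι := Classical.arbitrary ι
  have hWuniv : ∀ v : V, v ∈ Wsub β hT r r := by
    intro v
    obtain ⟨i, hi⟩ := hvert v
    exact mem_Wsub.mpr ⟨i, inSub_root hT r i, hi⟩
  have hWne : (Wsub β hT r r \ (∅ : Finset V)).Nonempty := by
    obtain ⟨v⟩ := hV
    exact ⟨v, Finset.mem_sdiff.mpr ⟨hWuniv v, Finset.notMem_empty v⟩⟩
  obtain ⟨T, hTnd, hTmem, hTgood⟩ := ML (hT := hT) (r := r) hcov hconn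
    ((subF hT r r).card) r ∅ le_rfl (Finset.empty_subset _) hWne
  refine ⟨T, hTnd, ?_, ?_⟩
  · intro v
    exact (hTmem v).mpr (Finset.mem_sdiff.mpr ⟨hWuniv v, Finset.notMem_empty v⟩)
  · intro p s hs
    obtain ⟨k, hk⟩ := hTgood p s hs
    calc (Finset.univ.filter (fun e : E =>
          ((ε e).1 ∈ s.verts ∧ (ε e).2 ∉ s.verts) ∨
          ((ε e).2 ∈ s.verts ∧ (ε e).1 ∉ s.verts))).card
        ≤ (β k).card * Δ := cut_card_le hdeg (β k) s.verts hk
      _ ≤ (t + 1) * Δ := Nat.mul_le_mul_right Δ (hsize k)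
      _ = 1 * Δ * (t + 1) := by ring
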